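/- Let 1/e ≤ d_b < √2/2 and set τ* = (1/d_b)·ln(1/d_b). Define φ(τ) = −2 d_b² + (1 − τ d_b) e^{−2 d_b τ}. Then φ(0) = 1 − 2 d_b² > 0, φ(τ*) < 0, and φ'(τ) = e^{−2 d_b τ}·d_b·(2 τ d_b − 3) < 0 for τ ∈ (0, τ*); hence there exists a unique τ_c ∈ (0, τ*) with φ(τ_c) = 0, φ > 0 on (0, τ_c), and φ < 0 on (τ_c, τ*). -/

import Mathlib

open Real Set

theorem stmt_13 (d_b : ℝ)
    (hdb1 : 1 / Real.exp 1 ≤ d_b) (hdb2 : d_b < Real.sqrt 2 / 2) :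
    let τs := (1 / d_b) * Real.log (1 / d_b)
    let φ : ℝ → ℝ := fun τ => -2 * d_b ^ 2 + (1 - τ * d_b) * exp (-(2 * d_b * τ))
    (φ 0 = 1 - 2 * d_b ^ 2 ∧ 0 < φ 0) ∧
    φ τs < 0 ∧
    (∀ τ ∈ Ioo (0 : ℝ) τs,
      HasDerivAt φ (exp (-(2 * d_b * τ)) * d_b * (2 * τ * d_b - 3)) τ ∧
      exp (-(2 * d_b * τ)) * d_b * (2 * τ * d_b - 3) < 0) ∧
    (∃ τc ∈ Ioo (0 : ℝ) τs, φ τc = 0 ∧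
      (∀ τ ∈ Ioo (0 : ℝ) τc, 0 < φ τ) ∧
      (∀ τ ∈ Ioo τc τs, φ τ < 0) ∧
      (∀ τ ∈ Ioo (0 : ℝ) τs, φ τ = 0 → τ = τc)) := by
  intro τs φ
  have hd0 : 0 < d_b := lt_of_lt_of_le (by positivity) hdb1
  have hd1 : d_b < 1 := lt_of_lt_of_le hdb2 (by
    rw [div_le_one (by norm_num : (0:ℝ) < 2)]
    nlinarith [Real.sq_sqrt (by norm_num : (2:ℝ) ≥ 0), Real.sqrt_nonneg 2])
  have hlog : Real.log d_b < 0 := Real.log_neg hd0 hd1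
  have hτs0 : 0 < τs := by
    have : 0 < Real.log (1 / d_b) := by
      rw [Real.log_div one_ne_zero (ne_of_gt hd0), Real.log_one]; linarith
    exact mul_pos (by positivity) this
  have hsq : d_b ^ 2 < 1 / 2 := by
    have h2 : (Real.sqrt 2 / 2) ^ 2 = 1 / 2 := by
      rw [div_pow, Real.sq_sqrt (by norm_num : (2:ℝ) ≥ 0)]; norm_num
    nlinarith [hd0.le]
  have hτsd : τs * d_b = -Real.log d_b := by
    show (1 / d_b) * Real.log (1 / d_b) * d_b = -Real.log d_b
    rw [Real.log_div one_ne_zero (ne_of_gt hd0), Real.log_one, one_div, zero_sub, mul_comm,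
      ← mul_assoc, mul_inv_cancel₀ (ne_of_gt hd0), one_mul]
  have hlogge : -1 ≤ Real.log d_b := by
    have := Real.log_le_log (by positivity) hdb1
    rw [Real.log_div one_ne_zero (Real.exp_ne_zero 1), Real.log_one,
      Real.log_exp] at this
    linarith
  -- derivative fact for all τ
  have hderiv : ∀ τ : ℝ, HasDerivAt φ
      (exp (-(2 * d_b * τ)) * d_b * (2 * τ * d_b - 3)) τ := by
    intro τ
    have h1 : HasDerivAt (fun τ : ℝ => 1 - τ * d_b) (-d_b) τ := by
      simpa using ((hasDerivAt_id τ).mul_const d_b).const_sub 1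
    have h2 : HasDerivAt (fun τ : ℝ => exp (-(2 * d_b * τ))) (exp (-(2 * d_b * τ)) * (-(2 * d_b))) τ := by
      have h3 : HasDerivAt (fun τ : ℝ => -(2 * d_b * τ)) (-(2 * d_b)) τ := by
        have h4 := ((hasDerivAt_id τ).const_mul (2 * d_b)).neg
        simp only [mul_one] at h4
        exact h4
      exact (Real.hasDerivAt_exp _).comp τ h3
    have := ((h1.mul h2).const_add (-2 * d_b ^ 2))
    exact this.congr_deriv (by ring)
  refine ⟨⟨by simp [φ]; ring, ?_⟩, ?_, ?_, ?_⟩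
  · simp only [φ]; norm_num; nlinarith
  · -- φ τs < 0
    have hexp : exp (-(2 * d_b * τs)) = d_b ^ 2 := by
      have h : -(2 * d_b * τs) = Real.log (d_b ^ 2) := by
        rw [Real.log_pow]; push_cast; nlinarith [hτsd]
      rw [h, Real.exp_log (by positivity)]
    simp only [φ]
    rw [hexp, hτsd]
    nlinarith [sq_nonneg d_b]
  · intro τ hτ
    refine ⟨hderiv τ, ?_⟩
    have hτd : τ * d_b < 1 := by
      have : τ < τs := hτ.2
      have h := mul_lt_mul_of_pos_right this hd0
      rw [hτsd] at h
      linarith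
    have h3 : 2 * τ * d_b - 3 < 0 := by nlinarith
    have he : 0 < exp (-(2 * d_b * τ)) := Real.exp_pos _
    exact mul_neg_of_pos_of_neg (mul_pos he hd0) h3
  · -- existence and uniqueness
    have hanti : StrictAntiOn φ (Icc 0 τs) := by
      apply strictAntiOn_of_deriv_neg (convex_Icc 0 τs)
      · exact Continuous.continuousOn (by simp only [φ]; fun_prop)
      · intro x hx
        rw [interior_Icc] at hx
        rw [(hderiv x).deriv]
        have hτd : x * d_b < 1 := by
          have h := mul_lt_mul_of_pos_right hx.2 hd0
          rw [hτsd] at h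
          linarith
        have h3 : 2 * x * d_b - 3 < 0 := by nlinarith
        have he : 0 < exp (-(2 * d_b * x)) := Real.exp_pos _
        exact mul_neg_of_pos_of_neg (mul_pos he hd0) h3
    have hφ0 : 0 < φ 0 := by simp only [φ]; norm_num; nlinarith
    have hφτs : φ τs < 0 := by
      have hexp : exp (-(2 * d_b * τs)) = d_b ^ 2 := by
        have h : -(2 * d_b * τs) = Real.log (d_b ^ 2) := by
          rw [Real.log_pow]; push_cast; nlinarith [hτsd]
        rw [h, Real.exp_log (by positivity)]
      simp only [φ]; rw [hexp, hτsd]; nlinarith [sq_nonneg d_b]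
    have hcont : ContinuousOn φ (Icc 0 τs) :=
      Continuous.continuousOn (by simp only [φ]; fun_prop)
    have hivt := intermediate_value_Ioo' hτs0.le hcont
    have h0mem : (0:ℝ) ∈ Ioo (φ τs) (φ 0) := ⟨hφτs, hφ0⟩
    obtain ⟨τc, hτc, hφτc⟩ := hivt h0mem
    refine ⟨τc, hτc, hφτc, ?_, ?_, ?_⟩
    · intro τ hτ
      have := hanti ⟨hτ.1.le, le_trans hτ.2.le hτc.2.le⟩ ⟨hτc.1.le, hτc.2.le⟩ hτ.2
      linarith [hφτc ▸ this]
    · intro τ hτ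
      have := hanti ⟨hτc.1.le, hτc.2.le⟩ ⟨le_trans hτc.1.le hτ.1.le, hτ.2.le⟩ hτ.1
      linarith [hφτc ▸ this]
    · intro τ hτ hφτ
      exact hanti.injOn ⟨hτ.1.le, hτ.2.le⟩ ⟨hτc.1.le, hτc.2.le⟩ (by rw [hφτ, hφτc])
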